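/- In any band (a semigroup all of whose elements are idempotents), the natural conjugacy relation ∼ₙ coincides with Green's relation D. -/

import Mathlib

/-- Natural conjugacy. -/
def NatConj {S : Type*} [Semigroup S] (a b : S) : Prop :=
  ∃ g h : WithOne S,
    (a : WithOne S) * g = g * (b : WithOne S) ∧
    (b : WithOne S) * h = h * (a : WithOne S) ∧
    h * (a : WithOne S) * g = (b : WithOne S) ∧
    g * (b : WithOne S) * h = (a : WithOne S)

/-- Green's L relation. -/
def GreenL {S : Type*} [Semigroup S] (a b : S) : Prop :=
  (∃ x : WithOne S, x * (b : WithOne S) = (a : WithOne S)) ∧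
  (∃ y : WithOne S, y * (a : WithOne S) = (b : WithOne S))

/-- Green's R relation. -/
def GreenR {S : Type*} [Semigroup S] (a b : S) : Prop :=
  (∃ x : WithOne S, (b : WithOne S) * x = (a : WithOne S)) ∧
  (∃ y : WithOne S, (a : WithOne S) * y = (b : WithOne S))

/-- Green's D relation, as the composition R ∘ L. -/
def GreenD {S : Type*} [Semigroup S] (a b : S) : Prop :=
  ∃ c : S, GreenR a c ∧ GreenL c b

/-- In any band, ∼ₙ = D. -/
theorem natConj_eq_greenD_of_band {S : Type*} [Semigroup S]
    (hband : ∀ x : S, x * x = x) :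
    ∀ a b : S, NatConj a b ↔ GreenD a b := by
  -- key: if aba = a and bab = b then GreenD a b, with middle element a*b
  have key : ∀ a b : S, a * b * a = a → b * (a * b) = b → GreenD a b := by
    intro a b h1 h2
    exact ⟨a * b,
      ⟨⟨(a : WithOne S), by exact_mod_cast h1⟩, ⟨(b : WithOne S), by exact_mod_cast rfl⟩⟩,
      ⟨(a : WithOne S), by exact_mod_cast rfl⟩, ⟨(b : WithOne S), by exact_mod_cast h2⟩⟩
  intro a b
  constructor
  · rintro ⟨g, h, e1, e2, e3, e4⟩
    induction g using WithOne.recOneCoe with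
    | one =>
      have : a = b := by
        have : (a : WithOne S) = (b : WithOne S) := by simpa using e1
        exact_mod_cast this
      subst this
      exact key a a (by rw [hband, hband]) (by rw [hband, hband])
    | coe g =>
      induction h using WithOne.recOneCoe with
      | one =>
        have : b = a := by
          have : (b : WithOne S) = (a : WithOne S) := by simpa using e2
          exact_mod_cast this
        subst this
        exact key b b (by rw [hband, hband]) (by rw [hband, hband])
      | coe h =>
        -- push equations down to S
        have e1' : a * g = g * b := by exact_mod_cast e1
        have e2' : b * h = h * a := by exact_mod_cast e2
        have e3' : h * a * g = b := by exact_mod_cast e3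
        have e4' : g * b * h = a := by exact_mod_cast e4
        have ah : a * h = a := by
          conv_lhs => rw [← e4']
          rw [mul_assoc, hband, e4']
        have bg : b * g = b := by
          conv_lhs => rw [← e3']
          rw [mul_assoc, hband, e3']
        have gha : g * (h * a) = a := by rw [← e2', ← mul_assoc, e4']
        have hgb : h * (g * b) = b := by rw [← e1', ← mul_assoc, e3']
        refine key a b ?_ ?_
        · calc a * b * a = a * b * (g * (h * a)) := by rw [gha]
            _ = (a * (b * g)) * (h * a) := by simp only [mul_assoc]
            _ = (a * b) * (h * a) := by rw [bg]
            _ = a * ((b * h) * a) := by simp only [mul_assoc]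
            _ = a * ((h * a) * a) := by rw [e2']
            _ = a * (h * (a * a)) := by simp only [mul_assoc]
            _ = a * (h * a) := by rw [hband]
            _ = (a * h) * a := by rw [mul_assoc]
            _ = a := by rw [ah, hband]
        · calc b * (a * b) = b * a * (h * (g * b)) := by rw [hgb, mul_assoc]
            _ = (b * (a * h)) * (g * b) := by simp only [mul_assoc]
            _ = (b * a) * (g * b) := by rw [ah]
            _ = b * ((a * g) * b) := by simp only [mul_assoc]
            _ = b * ((g * b) * b) := by rw [e1']
            _ = b * (g * (b * b)) := by simp only [mul_assoc]
            _ = b * (g * b) := by rw [hband]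
            _ = (b * g) * b := by rw [mul_assoc]
            _ = b := by rw [bg, hband]
  · rintro ⟨c, ⟨⟨x, hx⟩, ⟨y, hy⟩⟩, ⟨u, hu⟩, ⟨v, hv⟩⟩
    -- derive ca = a, ac = c, cb = c, bc = b in S
    have ca : c * a = a := by
      have : ((c * a : S) : WithOne S) = (a : WithOne S) := by
        push_cast
        rw [← hx, ← mul_assoc, ← WithOne.coe_mul, hband, hx]
      exact_mod_cast this
    have ac : a * c = c := by
      have : ((a * c : S) : WithOne S) = (c : WithOne S) := by
        push_cast
        rw [← hy, ← mul_assoc, ← WithOne.coe_mul, hband, hy]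
      exact_mod_cast this
    have cb : c * b = c := by
      have : ((c * b : S) : WithOne S) = (c : WithOne S) := by
        push_cast
        rw [← hu, mul_assoc, ← WithOne.coe_mul, hband, hu]
      exact_mod_cast this
    have bc : b * c = b := by
      have : ((b * c : S) : WithOne S) = (b : WithOne S) := by
        push_cast
        rw [← hv, mul_assoc, ← WithOne.coe_mul, hband, hv]
      exact_mod_cast this
    -- witnesses: g = c, h = b*a
    refine ⟨(c : WithOne S), ((b * a : S) : WithOne S), ?_, ?_, ?_, ?_⟩
    · exact_mod_cast (ac.trans cb.symm)
    · show ((b * (b * a) : S) : WithOne S) = ((b * a * a : S) : WithOne S)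
      rw [← mul_assoc, hband, mul_assoc, hband]
    · show ((b * a * a * c : S) : WithOne S) = (b : WithOne S)
      rw [mul_assoc b a a, hband, mul_assoc, ac, bc]
    · show ((c * b * (b * a) : S) : WithOne S) = (a : WithOne S)
      rw [cb, ← mul_assoc, cb, ca]
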